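/- For every index i and every pair of disjoint subsets I, J with I ∪ J = {1, …, r}, the pair (ϖ_i, v_{I,J}(ϖ_i)) spans an extremal ray of the Kostka cone 𝒦. -/

import Mathlib

/-- The Kostka cone `𝒦 ⊆ V × V`: pairs `(lam, mu)` of dominant weights such that
`lam - mu` is a nonnegative rational combination of the simple roots. -/
def Kostka {V : Type*} [AddCommGroup V] [Module ℚ V] {r : ℕ}
    (b : Fin r → V) (coroot : Fin r → Module.Dual ℚ V) : Set (V × V) :=
  {p | (∀ i, 0 ≤ coroot i p.1) ∧ (∀ i, 0 ≤ coroot i p.2) ∧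
    ∃ c : Fin r → ℚ, (∀ i, 0 ≤ c i) ∧ p.1 - p.2 = ∑ i, c i • b i}

namespace Stmt8Aux

variable {V : Type*} [AddCommGroup V] [Module ℚ V] {r : ℕ}

/-- The simple reflection as a module endomorphism. -/
noncomputable def refl (b : Fin r → V) (coroot : Fin r → Module.Dual ℚ V) (i : Fin r) :
    Module.End ℚ V := LinearMap.id - (coroot i).smulRight (b i)

theorem refl_apply (b : Fin r → V) (coroot : Fin r → Module.Dual ℚ V) (i : Fin r) (u : V) :
    refl b coroot i u = u - coroot i u • b i := rfl

theorem refl_sq (b : Fin r → V) (coroot : Fin r → Module.Dual ℚ V)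
    (hdiag : ∀ i, coroot i (b i) = 2) (i : Fin r) :
    refl b coroot i * refl b coroot i = 1 := by
  apply LinearMap.ext; intro u
  have h : coroot i (refl b coroot i u) = - coroot i u := by
    simp [refl_apply, map_sub, map_smul, hdiag]; ring
  show refl b coroot i (refl b coroot i u) = u
  rw [refl_apply, h, refl_apply]
  module

/-- The monoid generated by the simple reflections. -/
noncomputable def W (b : Fin r → V) (coroot : Fin r → Module.Dual ℚ V) :
    Submonoid (Module.End ℚ V) := Submonoid.closure (Set.range (refl b coroot))

theorem W_maps (b : Fin r → V) (coroot : Fin r → Module.Dual ℚ V)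
    (Φ : Set V) (hΦrefl : ∀ β ∈ Φ, ∀ i, β - coroot i β • b i ∈ Φ)
    {g : Module.End ℚ V} (hg : g ∈ W b coroot) : ∀ β ∈ Φ, g β ∈ Φ := by
  induction hg using Submonoid.closure_induction with
  | mem g hg => obtain ⟨i, rfl⟩ := hg; intro β hβ; exact hΦrefl β hβ i
  | one => intro β hβ; simpa using hβ
  | mul g g' hg hg' ihg ihg' =>
      intro β hβ
      have : (g * g') β = g (g' β) := rfl
      rw [this]; exact ihg _ (ihg' β hβ)

theorem W_finite (b : Module.Basis (Fin r) ℚ V) (coroot : Fin r → Module.Dual ℚ V)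
    (Φ : Set V) (hΦfin : Φ.Finite) (hΦroot : ∀ i, b i ∈ Φ)
    (hΦrefl : ∀ β ∈ Φ, ∀ i, β - coroot i β • b i ∈ Φ) :
    (W (⇑b) coroot : Set (Module.End ℚ V)).Finite := by
  set F : Module.End ℚ V → (Fin r → V) := fun g i => g (b i) with hF
  have hSfin : (Set.univ.pi (fun _ : Fin r => Φ)).Finite := Set.Finite.pi (fun _ => hΦfin)
  have hinj : Function.Injective F := by
    intro g g' h
    exact Module.Basis.ext b (fun i => congrFun h i)
  have hsub : (W (⇑b) coroot : Set (Module.End ℚ V)) ⊆ F ⁻¹' (Set.univ.pi (fun _ => Φ)) := by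
    intro g hg
    intro i _
    exact W_maps (⇑b) coroot Φ hΦrefl hg (b i) (hΦroot i)
  exact (hSfin.preimage (hinj.injOn)).subset hsub

/-- The averaged bilinear form. -/
noncomputable def Bform (b : Module.Basis (Fin r) ℚ V) (G : Finset (Module.End ℚ V)) :
    V →ₗ[ℚ] V →ₗ[ℚ] ℚ :=
  ∑ g ∈ G, ∑ i : Fin r, ((b.coord i) ∘ₗ g).smulRight ((b.coord i) ∘ₗ g)

theorem Bform_apply (b : Module.Basis (Fin r) ℚ V) (G : Finset (Module.End ℚ V)) (u u' : V) :
    Bform b G u u' = ∑ g ∈ G, ∑ i : Fin r, b.repr (g u) i * b.repr (g u') i := by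
  simp [Bform, LinearMap.sum_apply, Module.Basis.coord_apply, smul_eq_mul]

theorem Bform_nonneg (b : Module.Basis (Fin r) ℚ V) (G : Finset (Module.End ℚ V)) (u : V) :
    0 ≤ Bform b G u u := by
  rw [Bform_apply]
  exact Finset.sum_nonneg fun g _ => Finset.sum_nonneg fun i _ => mul_self_nonneg _

theorem Bform_def (b : Module.Basis (Fin r) ℚ V) (G : Finset (Module.End ℚ V))
    (h1 : (1 : Module.End ℚ V) ∈ G) (u : V) (h : Bform b G u u = 0) : u = 0 := by
  rw [Bform_apply] at h
  have h1' : ∑ i : Fin r,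
      b.repr ((1 : Module.End ℚ V) u) i * b.repr ((1 : Module.End ℚ V) u) i = 0 := by
    have := (Finset.sum_eq_zero_iff_of_nonneg
      (fun g _ => Finset.sum_nonneg fun i _ => mul_self_nonneg _)).mp h
    exact this 1 h1
  have h2 : ∀ i, b.repr u i = 0 := by
    intro i
    have hi := (Finset.sum_eq_zero_iff_of_nonneg (fun i _ => mul_self_nonneg _)).mp h1' i
      (Finset.mem_univ i)
    simpa [mul_self_eq_zero] using hi
  apply b.ext_elem
  intro i; simp [h2]

theorem Bform_invariant (b : Module.Basis (Fin r) ℚ V) (coroot : Fin r → Module.Dual ℚ V)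
    (G : Finset (Module.End ℚ V)) (i : Fin r)
    (hsq : refl (⇑b) coroot i * refl (⇑b) coroot i = 1)
    (hG : ∀ g ∈ G, g * refl (⇑b) coroot i ∈ G) (u u' : V) :
    Bform b G (refl (⇑b) coroot i u) (refl (⇑b) coroot i u') = Bform b G u u' := by
  rw [Bform_apply, Bform_apply]
  apply Finset.sum_nbij' (fun g => g * refl (⇑b) coroot i) (fun g => g * refl (⇑b) coroot i)
  · exact hG
  · exact hG
  · intro g _; rw [mul_assoc, hsq, mul_one]
  · intro g _; rw [mul_assoc, hsq, mul_one]
  · intro g _; rfl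

theorem Bform_coroot (b : Module.Basis (Fin r) ℚ V) (coroot : Fin r → Module.Dual ℚ V)
    (hdiag : ∀ i, coroot i (b i) = 2)
    (G : Finset (Module.End ℚ V)) (i : Fin r)
    (hsq : refl (⇑b) coroot i * refl (⇑b) coroot i = 1)
    (hG : ∀ g ∈ G, g * refl (⇑b) coroot i ∈ G) (u : V) :
    coroot i u * Bform b G (b i) (b i) = 2 * Bform b G u (b i) := by
  have hinv := Bform_invariant b coroot G i hsq hG u (b i)
  have hbi : refl (⇑b) coroot i (b i) = - b i := by
    rw [refl_apply, hdiag]; module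
  rw [hbi, refl_apply, map_sub, map_smul] at hinv
  simp only [LinearMap.sub_apply, LinearMap.smul_apply, map_neg, smul_eq_mul] at hinv
  linarith

theorem Bform_sum_right (b : Module.Basis (Fin r) ℚ V) (G : Finset (Module.End ℚ V)) (u : V)
    (t : Finset (Fin r)) (d : Fin r → ℚ) :
    Bform b G u (∑ j ∈ t, d j • b j) = ∑ j ∈ t, d j * Bform b G u (b j) := by
  simp [map_sum, map_smul, smul_eq_mul]

theorem Bform_sum_left (b : Module.Basis (Fin r) ℚ V) (G : Finset (Module.End ℚ V)) (u : V)
    (t : Finset (Fin r)) (d : Fin r → ℚ) :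
    Bform b G (∑ j ∈ t, d j • b j) u = ∑ j ∈ t, d j * Bform b G (b j) u := by
  simp [map_sum, map_smul, smul_eq_mul, LinearMap.sum_apply, LinearMap.smul_apply]

theorem Bform_eq_zero (b : Module.Basis (Fin r) ℚ V) (G : Finset (Module.End ℚ V))
    (h1 : (1 : Module.End ℚ V) ∈ G) (w : V)
    (h : ∀ j, b.repr w j = 0 ∨ Bform b G w (b j) = 0) : w = 0 := by
  apply Bform_def b G h1
  have hw : Bform b G w w = ∑ j, b.repr w j * Bform b G w (b j) := by
    conv_lhs => rw [show Bform b G w w = Bform b G w (∑ j, b.repr w j • b j) by rw [b.sum_repr]]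
    exact Bform_sum_right b G w Finset.univ _
  rw [hw]
  apply Finset.sum_eq_zero
  intro j _
  rcases h j with h' | h' <;> rw [h'] <;> ring

theorem coeff_nonneg (b : Module.Basis (Fin r) ℚ V) (coroot : Fin r → Module.Dual ℚ V)
    (G : Finset (Module.End ℚ V)) (h1 : (1 : Module.End ℚ V) ∈ G)
    (hkey : ∀ (u : V) (i : Fin r),
      coroot i u * Bform b G (b i) (b i) = 2 * Bform b G u (b i))
    (hoff : ∀ i j : Fin r, i ≠ j → coroot j (b i) ≤ 0)
    (u : V) (c : Fin r → ℚ) (hu : u = ∑ i, c i • b i)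
    (hcor : ∀ i, c i ≠ 0 → 0 ≤ coroot i u) : ∀ i, 0 ≤ c i := by
  have hdpos : ∀ i, 0 < Bform b G (b i) (b i) := by
    intro i
    rcases (Bform_nonneg b G (b i)).lt_or_eq with h | h
    · exact h
    · exact absurd (Bform_def b G h1 (b i) h.symm) (b.ne_zero i)
  have hBoff : ∀ i j : Fin r, i ≠ j → Bform b G (b i) (b j) ≤ 0 := by
    intro i j hij
    have h := hkey (b i) j
    have h2 : coroot j (b i) * Bform b G (b j) (b j) ≤ 0 :=
      mul_nonpos_of_nonpos_of_nonneg (hoff i j hij) (hdpos j).le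
    linarith
  classical
  set N : Finset (Fin r) := Finset.univ.filter (fun i => c i < 0) with hN
  set un : V := ∑ j ∈ N, (-c j) • b j with hun
  have hplus : u + un = ∑ i ∈ Nᶜ, c i • b i := by
    have hsplit : u = (∑ i ∈ Nᶜ, c i • b i) + ∑ i ∈ N, c i • b i := by
      rw [hu, Finset.sum_compl_add_sum]
    rw [hsplit, hun, add_assoc, ← Finset.sum_add_distrib]
    simp [neg_smul]
  have ha : Bform b G (u + un) un ≤ 0 := by
    rw [hplus, Bform_sum_left]
    apply Finset.sum_nonpos
    intro i hi
    have hci : 0 ≤ c i := by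
      simp only [hN, Finset.mem_compl, Finset.mem_filter, Finset.mem_univ, true_and,
        not_lt] at hi
      exact hi
    apply mul_nonpos_of_nonneg_of_nonpos hci
    rw [hun, Bform_sum_right]
    apply Finset.sum_nonpos
    intro j hj
    have hcj : c j < 0 := by simpa [hN] using hj
    have hij : i ≠ j := by
      intro h; rw [h] at hci; linarith
    exact mul_nonpos_of_nonneg_of_nonpos (by linarith) (hBoff i j hij)
  have hb : 0 ≤ Bform b G u un := by
    rw [hun, Bform_sum_right]
    apply Finset.sum_nonneg
    intro j hj
    have hcj : c j < 0 := by simpa [hN] using hj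
    have hcor' : 0 ≤ coroot j u := hcor j (by intro h; rw [h] at hcj; exact lt_irrefl 0 hcj)
    have hk := hkey u j
    have : 0 ≤ Bform b G u (b j) := by nlinarith [hdpos j]
    exact mul_nonneg (by linarith) this
  have hun0 : un = 0 := by
    apply Bform_def b G h1
    have hB : Bform b G un un = Bform b G (u + un) un - Bform b G u un := by
      rw [map_add, LinearMap.add_apply]; ring
    have := Bform_nonneg b G un
    linarith [hB ▸ (by linarith : Bform b G (u + un) un - Bform b G u un ≤ 0)]
  have hrepr : ∀ j, (if j ∈ N then -c j else 0) = 0 := by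
    have h2 : un = ∑ j, (if j ∈ N then -c j else 0) • b j := by
      rw [hun]
      symm
      simp only [ite_smul, zero_smul]
      rw [Finset.sum_ite_mem, Finset.univ_inter]
    have h3 := b.repr_sum_self (fun j => if j ∈ N then -c j else 0)
    rw [← h2, hun0] at h3
    intro j
    have := congrFun h3 j
    simpa using this.symm
  intro i
  by_contra h
  push_neg at h
  have hiN : i ∈ N := by simp [hN, h]
  have := hrepr i
  rw [if_pos hiN] at this
  linarith

end Stmt8Aux

/-- For every index `i₀` and every pair of disjoint subsets `I, J` with
`I ∪ J = {1, …, r}`, the pair `(ϖ_{i₀}, v_{I,J}(ϖ_{i₀}))` spans an extremal ray of the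
Kostka cone `𝒦`: it is nonzero, lies in `𝒦`, and whenever it is written as a sum of two
elements of `𝒦`, each summand is a nonnegative rational multiple of it. -/
theorem stmt_8 {V : Type*} [AddCommGroup V] [Module ℚ V] {r : ℕ}
    (b : Module.Basis (Fin r) ℚ V) (coroot : Fin r → Module.Dual ℚ V)
    (hdiag : ∀ i, coroot i (b i) = 2)
    (hoff : ∀ i j : Fin r, i ≠ j → coroot j (b i) ≤ 0)
    (hint : ∀ i j : Fin r, ∃ n : ℤ, coroot j (b i) = (n : ℚ))
    (Φ : Set V) (hΦfin : Φ.Finite) (hΦroot : ∀ i, b i ∈ Φ)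
    (hΦrefl : ∀ β ∈ Φ, ∀ i, β - coroot i β • b i ∈ Φ)
    (x : Fin r → Module.Dual ℚ V)
    (hx : ∀ i j : Fin r, x j (b i) = if i = j then 1 else 0)
    (ϖ : Fin r → V)
    (hϖ : ∀ i j : Fin r, coroot j (ϖ i) = if i = j then 1 else 0)
    (i₀ : Fin r)
    (I J : Finset (Fin r)) (hdisj : Disjoint I J) (hcover : I ∪ J = Finset.univ)
    (v : V) (hvI : ∀ i ∈ I, coroot i v = 0) (hvJ : ∀ j ∈ J, x j (ϖ i₀ - v) = 0) :
    (ϖ i₀, v) ≠ (0 : V × V) ∧ (ϖ i₀, v) ∈ Kostka (⇑b) coroot ∧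
      ∀ p q : V × V, p ∈ Kostka (⇑b) coroot → q ∈ Kostka (⇑b) coroot →
        p + q = (ϖ i₀, v) →
          (∃ c : ℚ, 0 ≤ c ∧ p = c • (ϖ i₀, v)) ∧
          (∃ c : ℚ, 0 ≤ c ∧ q = c • (ϖ i₀, v)) := by
  classical
  have hsq : ∀ i, Stmt8Aux.refl (⇑b) coroot i * Stmt8Aux.refl (⇑b) coroot i = 1 :=
    Stmt8Aux.refl_sq (⇑b) coroot hdiag
  have hWfin := Stmt8Aux.W_finite b coroot Φ hΦfin hΦroot hΦrefl
  set G : Finset (Module.End ℚ V) := hWfin.toFinset with hG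
  have h1G : (1 : Module.End ℚ V) ∈ G := by
    rw [hG, Set.Finite.mem_toFinset]; exact one_mem _
  have hmulG : ∀ i : Fin r, ∀ g ∈ G, g * Stmt8Aux.refl (⇑b) coroot i ∈ G := by
    intro i g hg
    rw [hG, Set.Finite.mem_toFinset] at hg ⊢
    exact mul_mem hg (Submonoid.subset_closure ⟨i, rfl⟩)
  have hkey : ∀ (u : V) (i : Fin r),
      coroot i u * Stmt8Aux.Bform b G (b i) (b i) = 2 * Stmt8Aux.Bform b G u (b i) :=
    fun u i => Stmt8Aux.Bform_coroot b coroot hdiag G i (hsq i) (hmulG i) u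
  have hIJ : ∀ k : Fin r, k ∈ I ∨ k ∈ J := by
    intro k
    have : k ∈ I ∪ J := by rw [hcover]; exact Finset.mem_univ k
    exact Finset.mem_union.mp this
  have hxrepr : ∀ (u : V) (j : Fin r), x j u = b.repr u j := by
    intro u j
    conv_lhs => rw [← b.sum_repr u]
    rw [map_sum, Finset.sum_eq_single j]
    · simp [hx]
    · intro k _ hkj; simp [map_smul, hx, hkj]
    · simp
  set c : Fin r → ℚ := fun i => b.repr (ϖ i₀ - v) i with hc
  have hcu : ϖ i₀ - v = ∑ i, c i • b i := (b.sum_repr _).symm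
  have hcJ : ∀ j ∈ J, c j = 0 := by
    intro j hj
    rw [hc]
    dsimp only
    rw [← hxrepr]
    exact hvJ j hj
  have hcorI : ∀ i ∈ I, coroot i (ϖ i₀ - v) = if i₀ = i then 1 else 0 := by
    intro i hi
    rw [map_sub, hvI i hi, hϖ, sub_zero]
  have hc0 : ∀ i, 0 ≤ c i := by
    apply Stmt8Aux.coeff_nonneg b coroot G h1G hkey hoff _ c hcu
    intro i hci
    rcases hIJ i with hi | hi
    · rw [hcorI i hi]; split <;> norm_num
    · exact absurd (hcJ i hi) hci
  have hmem : (ϖ i₀, v) ∈ Kostka (⇑b) coroot := by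
    refine ⟨fun i => ?_, fun i => ?_, c, hc0, hcu⟩
    · rw [hϖ]; split <;> norm_num
    · rcases hIJ i with hi | hi
      · rw [hvI i hi]
      · have hv' : coroot i v = coroot i (ϖ i₀) - coroot i (ϖ i₀ - v) := by
          rw [map_sub]; ring
        have hsum : coroot i (ϖ i₀ - v) = ∑ k, c k * coroot i (b k) := by
          rw [hcu, map_sum]; simp [map_smul, smul_eq_mul]
        have hle : coroot i (ϖ i₀ - v) ≤ 0 := by
          rw [hsum]
          apply Finset.sum_nonpos
          intro k _
          rcases eq_or_ne k i with rfl | hk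
          · rw [hcJ k hi]; simp
          · exact mul_nonpos_of_nonneg_of_nonpos (hc0 k) (hoff k i hk)
        rw [hv', hϖ]
        split <;> linarith
  have hzero : ∀ w : V, (∀ j, b.repr w j = 0 ∨ coroot j w = 0) → w = 0 := by
    intro w hw
    apply Stmt8Aux.Bform_eq_zero b G h1G
    intro j
    rcases hw j with h | h
    · exact Or.inl h
    · right
      have hk := hkey w j
      rw [h] at hk
      linarith
  have key : ∀ p q : V × V, p ∈ Kostka (⇑b) coroot → q ∈ Kostka (⇑b) coroot →
      p + q = (ϖ i₀, v) → ∃ t : ℚ, 0 ≤ t ∧ p = t • (ϖ i₀, v) := by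
    intro p q hp hq hpq
    obtain ⟨hp1, hp2, e, he0, hpe⟩ := hp
    obtain ⟨hq1, hq2, f, hf0, hqe⟩ := hq
    have h1 : p.1 + q.1 = ϖ i₀ := by rw [← Prod.fst_add, hpq]
    have h2 : p.2 + q.2 = v := by rw [← Prod.snd_add, hpq]
    set t : ℚ := coroot i₀ p.1 with ht
    refine ⟨t, hp1 i₀, ?_⟩
    have hcor1 : ∀ j, coroot j p.1 = t * coroot j (ϖ i₀) := by
      intro j
      rcases eq_or_ne i₀ j with rfl | hj
      · rw [hϖ, if_pos rfl, mul_one]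
      · have hjp : coroot j p.1 + coroot j q.1 = 0 := by
          rw [← map_add, h1, hϖ, if_neg hj]
        have h3 := hp1 j; have h4 := hq1 j
        rw [hϖ, if_neg hj, mul_zero]
        linarith
    have hlam : p.1 = t • ϖ i₀ := by
      rw [← sub_eq_zero]
      apply hzero
      intro j
      right
      rw [map_sub, map_smul, smul_eq_mul, hcor1 j, sub_self]
    have hmu : p.2 = t • v := by
      rw [← sub_eq_zero]
      apply hzero
      intro k
      rcases hIJ k with hk | hk
      · right
        have hks : coroot k p.2 + coroot k q.2 = 0 := by
          rw [← map_add, h2, hvI k hk]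
        have h3 := hp2 k; have h4 := hq2 k
        rw [map_sub, map_smul, smul_eq_mul, hvI k hk, mul_zero, sub_zero]
        linarith
      · left
        have hrp : b.repr (p.1 - p.2) k = e k := by
          rw [hpe]; exact congrFun (b.repr_sum_self e) k
        have hrq : b.repr (q.1 - q.2) k = f k := by
          rw [hqe]; exact congrFun (b.repr_sum_self f) k
        have hadd : (p.1 - p.2) + (q.1 - q.2) = ϖ i₀ - v := by
          rw [← h1, ← h2]; abel
        have hsum0 : e k + f k = 0 := by
          have h5 := congrArg (fun u => b.repr u k) hadd
          simp only [map_add, Finsupp.add_apply] at h5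
          rw [hrp, hrq] at h5
          rw [h5]
          exact hcJ k hk
        have hek : e k = 0 := by
          have := he0 k; have := hf0 k; linarith
        have hrv : b.repr v k = b.repr (ϖ i₀) k := by
          have h6 : b.repr (ϖ i₀ - v) k = 0 := hcJ k hk
          rw [map_sub, Finsupp.sub_apply] at h6
          linarith
        have hrp2 : b.repr p.2 k = t * b.repr (ϖ i₀) k := by
          have h7 : b.repr p.2 k = b.repr p.1 k - b.repr (p.1 - p.2) k := by
            rw [map_sub, Finsupp.sub_apply]; ring
          rw [h7, hrp, hek, sub_zero, hlam, map_smul, Finsupp.smul_apply, smul_eq_mul]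
        rw [map_sub, Finsupp.sub_apply, map_smul, Finsupp.smul_apply, smul_eq_mul,
          hrp2, hrv]
        ring
    have : t • (ϖ i₀, v) = (t • ϖ i₀, t • v) := rfl
    rw [this]
    exact Prod.ext hlam hmu
  refine ⟨?_, hmem, fun p q hp hq hpq => ⟨key p q hp hq hpq, key q p hq hp (by rwa [add_comm])⟩⟩
  intro h
  have h1 : ϖ i₀ = 0 := congrArg Prod.fst h
  have h2 := hϖ i₀ i₀
  rw [h1] at h2
  simp at h2
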